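/- arXiv:1002.2396 — 2 statements merged into one kernel-verified Lean document; each statement's English description precedes it below -/
import Mathlib

section
/- Let b(x) = log|x| on ℝ and let H be the Hilbert transform. For every increasing function φ : [1,∞) → [0,∞) with lim_{t→∞} t²/φ(t) = ∞ and every constant C > 0, there exist a weight w ∈ A₂ on ℝ and a function f with 0 < ‖f‖_{L²(w)} < ∞ such that ‖[b,H]f‖_{L²(w)} > C φ([w]_{A₂}) ‖f‖_{L²(w)}. Consequently sup_{w ∈ A₂} ‖[b,H]‖_{L²(w)→L²(w)} / φ([w]_{A₂}) = ∞. -/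
open MeasureTheory ENNReal

noncomputable section

/-- `|Q|⁻¹ ∫_Q f` over a set of reals, as an extended nonnegative real. -/
def setAvgR (Q : Set ℝ) (f : ℝ → ℝ) : ℝ≥0∞ :=
  (volume Q)⁻¹ * ∫⁻ x in Q, ENNReal.ofReal (f x)

/-- The `A₂` constant of a weight on `ℝ`, the supremum being over all bounded intervals. -/
def A2constR (w : ℝ → ℝ) : ℝ≥0∞ :=
  ⨆ (a : ℝ) (h : ℝ) (_ : 0 < h),
    setAvgR (Set.Ioo a (a + h)) w * setAvgR (Set.Ioo a (a + h)) (fun x => (w x)⁻¹)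

/-- The weighted norm `‖f‖_{L^p(w)} = (∫ |f|^p w)^{1/p}` on `ℝ`. -/
def wNormR (p : ℝ) (w f : ℝ → ℝ) : ℝ≥0∞ :=
  (∫⁻ x, (ENNReal.ofReal |f x|) ^ p * ENNReal.ofReal (w x)) ^ (1 / p)

/-- The commutator of the Hilbert transform with `b`:
`[b,H]f(x) = p.v. ∫ (b(x)-b(y)) f(y)/(x-y) dy`, the principal value being the limit of the
truncated integrals as the truncation parameter `ε` tends to `0⁺`. -/
def pvCommH (b f : ℝ → ℝ) (x : ℝ) : ℝ :=
  Filter.limUnder (nhdsWithin 0 (Set.Ioi (0 : ℝ))) fun ε : ℝ =>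
    ∫ y in {y : ℝ | ε < |x - y|}, (b x - b y) * f y / (x - y)

open Set

namespace CommSharp

variable {δ : ℝ}

/-- the power weight -/
def W (δ : ℝ) (x : ℝ) : ℝ := if x = 0 then 1 else |x| ^ (δ - 1)

lemma W_pos (δ : ℝ) (x : ℝ) : 0 < W δ x := by
  unfold W
  split_ifs with h
  · norm_num
  · exact Real.rpow_pos_of_pos (abs_pos.mpr h) _

lemma W_of_ne (h : x ≠ 0) : W δ x = |x| ^ (δ - 1) := if_neg h

lemma W_inv_of_ne (h : x ≠ 0) : (W δ x)⁻¹ = |x| ^ (1 - δ) := by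
  rw [W_of_ne h, ← Real.rpow_neg (abs_nonneg x)]
  norm_num

lemma W_ae (δ : ℝ) : W δ =ᵐ[volume] fun x => |x| ^ (δ - 1) := by
  filter_upwards [compl_mem_ae_iff.mpr (Real.volume_singleton (a := (0:ℝ)))] with x hx
  exact W_of_ne hx

lemma integrableOn_abs_rpow (hδ : 0 < δ) (R : ℝ) (hR : 0 < R) :
    IntegrableOn (fun x => |x| ^ (δ - 1)) (Ioo (-R) R) := by
  have hpos : IntegrableOn (fun x => |x| ^ (δ - 1)) (Ioo 0 R) := by
    have h1 : IntegrableOn (fun x : ℝ => x ^ (δ - 1)) (Ioo 0 R) :=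
      (intervalIntegral.integrableOn_Ioo_rpow_iff hR).mpr (by linarith)
    exact h1.congr_fun (fun x hx => by rw [abs_of_pos hx.1]) measurableSet_Ioo
  have hneg : IntegrableOn (fun x => |x| ^ (δ - 1)) (Ioo (-R) 0) := by
    have h2 : Integrable ((Ioo (0:ℝ) R).indicator (fun x => |x| ^ (δ - 1))) := by
      rwa [integrable_indicator_iff measurableSet_Ioo]
    have h3 := h2.comp_neg
    have h4 : (fun x : ℝ => (Ioo (0:ℝ) R).indicator (fun x => |x| ^ (δ - 1)) (-x))
        = (Ioo (-R) (0:ℝ)).indicator (fun x => |x| ^ (δ - 1)) := by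
      funext x
      by_cases hx : x ∈ Ioo (-R) (0:ℝ)
      · rw [indicator_of_mem hx]
        have : -x ∈ Ioo (0:ℝ) R := ⟨by linarith [hx.2], by linarith [hx.1]⟩
        rw [indicator_of_mem this, abs_neg]
      · rw [indicator_of_notMem hx]
        have : -x ∉ Ioo (0:ℝ) R := by
          intro h; exact hx ⟨by linarith [h.2], by linarith [h.1]⟩
        rw [indicator_of_notMem this]
    rw [h4] at h3
    rwa [integrable_indicator_iff measurableSet_Ioo] at h3
  have : IntegrableOn (fun x => |x| ^ (δ - 1)) (Ioc (-R) 0) := by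
    rwa [integrableOn_Ioc_iff_integrableOn_Ioo]
  have := this.union hpos
  rwa [Set.Ioc_union_Ioo_eq_Ioo (by linarith) hR] at this

lemma integrableOn_W (hδ : 0 < δ) {s : Set ℝ} (hs : Bornology.IsBounded s) :
    IntegrableOn (W δ) s := by
  obtain ⟨R, hR⟩ := hs.subset_closedBall 0
  have hR1 : 0 < |R| + 1 := by positivity
  have hsub : s ⊆ Ioo (-(|R|+1)) (|R|+1) := fun x hx => by
    have := hR hx
    simp only [Metric.mem_closedBall, Real.dist_eq, sub_zero] at this
    have h1 : |x| ≤ |R| := this.trans (le_abs_self R)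
    constructor <;> [linarith [neg_abs_le x]; linarith [le_abs_self x]]
  exact ((integrableOn_abs_rpow hδ (|R|+1) hR1).mono_set hsub).congr
    (ae_restrict_of_ae (W_ae δ).symm)

lemma locallyIntegrable_W (hδ : 0 < δ) : LocallyIntegrable (W δ) := by
  rw [MeasureTheory.locallyIntegrable_iff]
  exact fun K hK => integrableOn_W hδ hK.isBounded

end CommSharp

namespace CommSharp

variable {δ : ℝ}

lemma rpow_subadd (hδ0 : 0 ≤ δ) (hδ1 : δ ≤ 1) {c d : ℝ} (h0 : 0 ≤ c) (hcd : c ≤ d) :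
    d ^ δ - c ^ δ ≤ (d - c) ^ δ := by
  have h := NNReal.rpow_add_le_add_rpow (p := δ) (Real.toNNReal c) (Real.toNNReal (d - c)) hδ0 hδ1
  have hsum : Real.toNNReal c + Real.toNNReal (d - c) = Real.toNNReal d := by
    rw [← Real.toNNReal_add h0 (by linarith)]
    norm_num
  rw [hsum] at h
  have h' := NNReal.coe_le_coe.mpr h
  push_cast [NNReal.coe_rpow] at h'
  rw [Real.coe_toNNReal c h0, Real.coe_toNNReal d (by linarith),
    Real.coe_toNNReal (d - c) (by linarith)] at h'
  linarith

lemma intervalIntegrable_abs_rpow (hδ : 0 < δ) (a b : ℝ) :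
    IntervalIntegrable (fun x => |x| ^ (δ - 1)) volume a b := by
  rcases le_total a b with hab | hab
  · rw [intervalIntegrable_iff_integrableOn_Ioo_of_le hab]
    refine (integrableOn_abs_rpow hδ (|a| + |b| + 1) (by positivity)).mono_set ?_
    intro x hx
    exact ⟨by linarith [neg_abs_le a, hx.1, abs_nonneg b],
      by linarith [le_abs_self b, hx.2, abs_nonneg a]⟩
  · refine IntervalIntegrable.symm ?_
    rw [intervalIntegrable_iff_integrableOn_Ioo_of_le hab]
    refine (integrableOn_abs_rpow hδ (|a| + |b| + 1) (by positivity)).mono_set ?_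
    intro x hx
    exact ⟨by linarith [neg_abs_le b, hx.1, abs_nonneg a],
      by linarith [le_abs_self a, hx.2, abs_nonneg b]⟩

end CommSharp

namespace CommSharp

variable {δ : ℝ}

lemma integral_abs_rpow_pos (hδ : 0 < δ) {c d : ℝ} (h0 : 0 ≤ c) (hcd : c ≤ d) :
    ∫ x in c..d, |x| ^ (δ - 1) = (d ^ δ - c ^ δ) / δ := by
  have hcongr : ∫ x in c..d, |x| ^ (δ - 1) = ∫ x in c..d, x ^ (δ - 1) := by
    refine intervalIntegral.integral_congr fun x hx => ?_
    rw [uIcc_of_le hcd] at hx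
    rw [abs_of_nonneg (le_trans h0 hx.1)]
  rw [hcongr, integral_rpow (Or.inl (by linarith))]
  have h1 : δ - 1 + 1 = δ := by ring
  rw [h1]

lemma integral_abs_rpow_pos_le (hδ : 0 < δ) (hδ1 : δ ≤ 1) {c d : ℝ} (h0 : 0 ≤ c) (hcd : c ≤ d) :
    ∫ x in c..d, |x| ^ (δ - 1) ≤ (d - c) ^ δ / δ := by
  rw [integral_abs_rpow_pos hδ h0 hcd]
  gcongr
  exact rpow_subadd hδ.le hδ1 h0 hcd

lemma integral_abs_rpow_neg_le (hδ : 0 < δ) (hδ1 : δ ≤ 1) {c d : ℝ} (hd : d ≤ 0) (hcd : c ≤ d) :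
    ∫ x in c..d, |x| ^ (δ - 1) ≤ (d - c) ^ δ / δ := by
  have key := intervalIntegral.integral_comp_neg (a := -d) (b := -c)
    (fun x : ℝ => |x| ^ (δ - 1))
  simp only [abs_neg, neg_neg] at key
  rw [← key]
  have := integral_abs_rpow_pos_le hδ hδ1 (c := -d) (d := -c) (by linarith) (by linarith)
  calc ∫ x in -d..-c, |x| ^ (δ - 1) ≤ (-c - -d) ^ δ / δ := this
    _ = (d - c) ^ δ / δ := by ring_nf

lemma integral_abs_rpow_le (hδ : 0 < δ) (hδ1 : δ ≤ 1) {a b : ℝ} (hab : a ≤ b) :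
    ∫ x in a..b, |x| ^ (δ - 1) ≤ 2 * ((b - a) ^ δ / δ) := by
  have hnn : 0 ≤ (b - a) ^ δ / δ :=
    div_nonneg (Real.rpow_nonneg (by linarith) δ) hδ.le
  have hbnd : ∀ u v : ℝ, a ≤ u → u ≤ v → v ≤ b → (v - u) ^ δ / δ ≤ (b - a) ^ δ / δ := by
    intro u v hu huv hv
    have h := Real.rpow_le_rpow (by linarith : (0:ℝ) ≤ v - u)
      (by linarith : v - u ≤ b - a) hδ.le
    exact div_le_div_of_nonneg_right h hδ.le

  rcases le_or_gt b 0 with hb | hb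
  · have := integral_abs_rpow_neg_le hδ hδ1 hb hab
    linarith
  rcases le_or_gt 0 a with ha | ha
  · have := integral_abs_rpow_pos_le hδ hδ1 ha hab
    linarith
  · rw [← intervalIntegral.integral_add_adjacent_intervals (b := 0)
      (intervalIntegrable_abs_rpow hδ a 0) (intervalIntegrable_abs_rpow hδ 0 b)]
    have h1 := (integral_abs_rpow_neg_le hδ hδ1 (le_refl 0) ha.le).trans
      (hbnd a 0 (le_refl a) ha.le hb.le)
    have h2 := (integral_abs_rpow_pos_le hδ hδ1 (le_refl 0) hb.le).trans
      (hbnd 0 b ha.le hb.le (le_refl b))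
    linarith

end CommSharp

namespace CommSharp

variable {δ : ℝ}

lemma Winv_ae (δ : ℝ) : (fun x => (W δ x)⁻¹) =ᵐ[volume] fun x => |x| ^ ((2 - δ) - 1) := by
  filter_upwards [compl_mem_ae_iff.mpr (Real.volume_singleton (a := (0:ℝ)))] with x hx
  rw [W_inv_of_ne hx]
  congr 1
  ring

lemma setIntegral_Ioo_eq_intervalIntegral {g : ℝ → ℝ} {a b : ℝ} (hab : a ≤ b) :
    ∫ x in Ioo a b, g x = ∫ x in a..b, g x := by
  rw [intervalIntegral.integral_of_le hab, integral_Ioc_eq_integral_Ioo]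

lemma setLIntegral_ofReal_ae {g h : ℝ → ℝ} {s : Set ℝ}
    (hgh : g =ᵐ[volume] h) :
    ∫⁻ x in s, ENNReal.ofReal (g x) = ∫⁻ x in s, ENNReal.ofReal (h x) := by
  refine lintegral_congr_ae ?_
  filter_upwards [ae_restrict_of_ae hgh] with x hx
  rw [hx]

lemma setLIntegral_W_le (hδ : 0 < δ) (hδ1 : δ ≤ 1) {a b : ℝ} (hab : a ≤ b) :
    ∫⁻ x in Ioo a b, ENNReal.ofReal (W δ x) ≤ ENNReal.ofReal (2 * ((b - a) ^ δ / δ)) := by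
  rw [setLIntegral_ofReal_ae (W_ae δ)]
  have hint : IntegrableOn (fun x => |x| ^ (δ - 1)) (Ioo a b) := by
    rw [← intervalIntegrable_iff_integrableOn_Ioo_of_le hab]
    exact intervalIntegrable_abs_rpow hδ a b
  rw [← ofReal_integral_eq_lintegral_ofReal hint
    (Filter.Eventually.of_forall fun x => Real.rpow_nonneg (abs_nonneg x) _)]
  refine ENNReal.ofReal_le_ofReal ?_
  rw [setIntegral_Ioo_eq_intervalIntegral hab]
  exact integral_abs_rpow_le hδ hδ1 hab

lemma setLIntegral_W_Ioo01 (hδ : 0 < δ) :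
    ∫⁻ x in Ioo (0:ℝ) 1, ENNReal.ofReal (W δ x) = ENNReal.ofReal (1 / δ) := by
  rw [setLIntegral_ofReal_ae (W_ae δ)]
  have hint : IntegrableOn (fun x => |x| ^ (δ - 1)) (Ioo (0:ℝ) 1) := by
    rw [← intervalIntegrable_iff_integrableOn_Ioo_of_le zero_le_one]
    exact intervalIntegrable_abs_rpow hδ 0 1
  rw [← ofReal_integral_eq_lintegral_ofReal hint
    (Filter.Eventually.of_forall fun x => Real.rpow_nonneg (abs_nonneg x) _)]
  congr 1
  rw [setIntegral_Ioo_eq_intervalIntegral zero_le_one,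
    integral_abs_rpow_pos hδ le_rfl zero_le_one,
    Real.one_rpow, Real.zero_rpow hδ.ne']
  norm_num

lemma setLIntegral_Winv_Ioo01 (hδ1 : δ < 1) :
    ∫⁻ x in Ioo (0:ℝ) 1, ENNReal.ofReal ((W δ x)⁻¹) = ENNReal.ofReal (1 / (2 - δ)) := by
  rw [setLIntegral_ofReal_ae (Winv_ae δ)]
  have h2 : 0 < 2 - δ := by linarith
  have hint : IntegrableOn (fun x => |x| ^ ((2 - δ) - 1)) (Ioo (0:ℝ) 1) := by
    rw [← intervalIntegrable_iff_integrableOn_Ioo_of_le zero_le_one]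
    exact intervalIntegrable_abs_rpow h2 0 1
  rw [← ofReal_integral_eq_lintegral_ofReal hint
    (Filter.Eventually.of_forall fun x => Real.rpow_nonneg (abs_nonneg x) _)]
  congr 1
  rw [setIntegral_Ioo_eq_intervalIntegral zero_le_one,
    integral_abs_rpow_pos h2 le_rfl zero_le_one,
    Real.one_rpow, Real.zero_rpow h2.ne']
  norm_num

lemma setLIntegral_ofReal_le_of_bound {g : ℝ → ℝ} {s : Set ℝ} {M : ℝ}
    (hs : MeasurableSet s) (hbd : ∀ x ∈ s, g x ≤ M) :
    ∫⁻ x in s, ENNReal.ofReal (g x) ≤ ENNReal.ofReal M * volume s := by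
  calc ∫⁻ x in s, ENNReal.ofReal (g x) ≤ ∫⁻ _ in s, ENNReal.ofReal M := by
        refine setLIntegral_mono' hs fun x hx => ?_
        exact ENNReal.ofReal_le_ofReal (hbd x hx)
    _ = ENNReal.ofReal M * volume s := by rw [setLIntegral_const]

end CommSharp

open MeasureTheory ENNReal


namespace CommSharp

variable {δ : ℝ}

lemma avgR_le_const {g : ℝ → ℝ} {a b M : ℝ} (hab : a < b)
    (hbd : ∀ x ∈ Ioo a b, g x ≤ M) :
    setAvgR (Ioo a b) g ≤ ENNReal.ofReal M := by
  unfold setAvgR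
  have hvol : volume (Ioo a b) = ENNReal.ofReal (b - a) := Real.volume_Ioo
  have h0 : volume (Ioo a b) ≠ 0 := by
    rw [hvol]; simp [ENNReal.ofReal_eq_zero]; linarith
  have htop : volume (Ioo a b) ≠ ⊤ := by rw [hvol]; exact ENNReal.ofReal_ne_top
  calc (volume (Ioo a b))⁻¹ * ∫⁻ x in Ioo a b, ENNReal.ofReal (g x)
      ≤ (volume (Ioo a b))⁻¹ * (ENNReal.ofReal M * volume (Ioo a b)) :=
        mul_le_mul_right (setLIntegral_ofReal_le_of_bound measurableSet_Ioo hbd) _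
    _ = ENNReal.ofReal M := by
        rw [mul_comm (ENNReal.ofReal M), ← mul_assoc, ENNReal.inv_mul_cancel h0 htop, one_mul]

lemma avgR_congr_ae {g h : ℝ → ℝ} {s : Set ℝ} (hgh : g =ᵐ[volume] h) :
    setAvgR s g = setAvgR s h := by
  unfold setAvgR
  rw [setLIntegral_ofReal_ae hgh]

lemma far_prod_le (hδ : 0 < δ) (hδ1 : δ ≤ 1) {m : ℝ} (hm : 0 < m) :
    m ^ (δ - 1) * (2 * m) ^ ((2 - δ) - 1) ≤ 2 := by
  have h1 : (2 - δ) - 1 = 1 - δ := by ring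
  rw [h1, Real.mul_rpow (by norm_num) hm.le]
  have h2 : (2:ℝ) ^ (1 - δ) ≤ 2 := by
    calc (2:ℝ) ^ (1 - δ) ≤ 2 ^ (1:ℝ) :=
      Real.rpow_le_rpow_of_exponent_le one_le_two (by linarith)
    _ = 2 := Real.rpow_one 2
  have h3 : m ^ (δ - 1) * m ^ (1 - δ) = 1 := by
    rw [← Real.rpow_add hm]; norm_num
  calc m ^ (δ - 1) * (2 ^ (1 - δ) * m ^ (1 - δ))
      ≤ m ^ (δ - 1) * (2 * m ^ (1 - δ)) := by
        have hnn : 0 ≤ m ^ (δ - 1) := Real.rpow_nonneg hm.le _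
        have hnn2 : 0 ≤ m ^ (1 - δ) := Real.rpow_nonneg hm.le _
        nlinarith
    _ = 2 * (m ^ (δ - 1) * m ^ (1 - δ)) := by ring
    _ = 2 := by rw [h3]; norm_num

lemma A2_le (hδ : 0 < δ) (hδ1 : δ ≤ 1) : A2constR (W δ) ≤ ENNReal.ofReal (6 / δ) := by
  have h6 : (2:ℝ) ≤ 6 / δ := by
    rw [le_div_iff₀ hδ]; nlinarith
  refine iSup_le fun a => iSup_le fun h => iSup_le fun hh => ?_
  have hab : a < a + h := by linarith
  rcases le_or_gt h a with hfar | h1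
  · -- far right: 0 < a, on Q : a ≤ x
    have ha : 0 < a := lt_of_lt_of_le hh hfar
    have havg1 : setAvgR (Ioo a (a+h)) (W δ) ≤ ENNReal.ofReal (a ^ (δ - 1)) := by
      rw [avgR_congr_ae (W_ae δ)]
      refine avgR_le_const hab fun x hx => ?_
      have hax : a ≤ |x| := by rw [abs_of_pos (ha.trans hx.1)]; exact hx.1.le
      exact Real.rpow_le_rpow_of_nonpos ha hax (by linarith)
    have havg2 : setAvgR (Ioo a (a+h)) (fun x => (W δ x)⁻¹)
        ≤ ENNReal.ofReal ((2 * a) ^ ((2 - δ) - 1)) := by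
      rw [avgR_congr_ae (Winv_ae δ)]
      refine avgR_le_const hab fun x hx => ?_
      have hax : |x| ≤ 2 * a := by
        rw [abs_of_pos (ha.trans hx.1)]; linarith [hx.2]
      exact Real.rpow_le_rpow (abs_nonneg x) hax (by linarith)
    calc setAvgR (Ioo a (a+h)) (W δ) * setAvgR (Ioo a (a+h)) (fun x => (W δ x)⁻¹)
        ≤ ENNReal.ofReal (a ^ (δ - 1)) * ENNReal.ofReal ((2 * a) ^ ((2 - δ) - 1)) :=
          mul_le_mul' havg1 havg2
      _ = ENNReal.ofReal (a ^ (δ - 1) * (2 * a) ^ ((2 - δ) - 1)) :=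
          (ENNReal.ofReal_mul (Real.rpow_nonneg ha.le _)).symm
      _ ≤ ENNReal.ofReal (6 / δ) :=
          ENNReal.ofReal_le_ofReal ((far_prod_le hδ hδ1 ha).trans h6)
  rcases le_or_gt (a + h) (-h) with hfar | h2
  · -- far left: x < a + h ≤ -h < 0, set m = -(a+h)
    set m := -(a + h) with hm_def
    have hm : 0 < m := by simp only [hm_def]; linarith
    have havg1 : setAvgR (Ioo a (a+h)) (W δ) ≤ ENNReal.ofReal (m ^ (δ - 1)) := by
      rw [avgR_congr_ae (W_ae δ)]
      refine avgR_le_const hab fun x hx => ?_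
      have hx0 : x < 0 := by nlinarith [hx.2]
      have hax : m ≤ |x| := by rw [abs_of_neg hx0]; linarith [hx.2]
      exact Real.rpow_le_rpow_of_nonpos hm hax (by linarith)
    have havg2 : setAvgR (Ioo a (a+h)) (fun x => (W δ x)⁻¹)
        ≤ ENNReal.ofReal ((2 * m) ^ ((2 - δ) - 1)) := by
      rw [avgR_congr_ae (Winv_ae δ)]
      refine avgR_le_const hab fun x hx => ?_
      have hx0 : x < 0 := by nlinarith [hx.2]
      have hax : |x| ≤ 2 * m := by
        rw [abs_of_neg hx0]; simp only [hm_def]; linarith [hx.1]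
      exact Real.rpow_le_rpow (abs_nonneg x) hax (by linarith)
    calc setAvgR (Ioo a (a+h)) (W δ) * setAvgR (Ioo a (a+h)) (fun x => (W δ x)⁻¹)
        ≤ ENNReal.ofReal (m ^ (δ - 1)) * ENNReal.ofReal ((2 * m) ^ ((2 - δ) - 1)) :=
          mul_le_mul' havg1 havg2
      _ = ENNReal.ofReal (m ^ (δ - 1) * (2 * m) ^ ((2 - δ) - 1)) :=
          (ENNReal.ofReal_mul (Real.rpow_nonneg hm.le _)).symm
      _ ≤ ENNReal.ofReal (6 / δ) :=
          ENNReal.ofReal_le_ofReal ((far_prod_le hδ hδ1 hm).trans h6)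
  · -- middle case : -2h < a < h, so |x| ≤ 2h on Q
    have havg1 : setAvgR (Ioo a (a+h)) (W δ)
        ≤ ENNReal.ofReal (2 * (h ^ δ / δ)) * (ENNReal.ofReal h)⁻¹ := by
      unfold setAvgR
      rw [Real.volume_Ioo]
      have : a + h - a = h := by ring
      rw [this, mul_comm]
      exact mul_le_mul_left (by simpa [this] using setLIntegral_W_le hδ hδ1 hab.le) _
    have havg2 : setAvgR (Ioo a (a+h)) (fun x => (W δ x)⁻¹)
        ≤ ENNReal.ofReal ((2 * h) ^ ((2 - δ) - 1)) := by
      rw [avgR_congr_ae (Winv_ae δ)]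
      refine avgR_le_const hab fun x hx => ?_
      have hax : |x| ≤ 2 * h := by
        rw [abs_le]; constructor
        · linarith [hx.1]
        · linarith [hx.2]
      exact Real.rpow_le_rpow (abs_nonneg x) hax (by linarith)
    have hkey : ENNReal.ofReal (2 * (h ^ δ / δ)) * (ENNReal.ofReal h)⁻¹
        * ENNReal.ofReal ((2 * h) ^ ((2 - δ) - 1)) ≤ ENNReal.ofReal (6 / δ) := by
      rw [← ENNReal.ofReal_inv_of_pos hh, ← ENNReal.ofReal_mul (by positivity),
        ← ENNReal.ofReal_mul (by positivity)]
      refine ENNReal.ofReal_le_ofReal ?_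
      have h1 : (2 - δ) - 1 = 1 - δ := by ring
      rw [h1, Real.mul_rpow (by norm_num) hh.le]
      have h2 : (2:ℝ) ^ (1 - δ) ≤ 2 := by
        calc (2:ℝ) ^ (1 - δ) ≤ 2 ^ (1:ℝ) :=
          Real.rpow_le_rpow_of_exponent_le one_le_two (by linarith)
        _ = 2 := Real.rpow_one 2
      have h3 : h ^ δ * h ^ (1 - δ) = h := by
        rw [← Real.rpow_add hh]; norm_num
      have hd : 0 < h ^ δ := Real.rpow_pos_of_pos hh δ
      have hd2 : 0 < h ^ (1 - δ) := Real.rpow_pos_of_pos hh _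
      calc 2 * (h ^ δ / δ) * h⁻¹ * (2 ^ (1 - δ) * h ^ (1 - δ))
          ≤ 2 * (h ^ δ / δ) * h⁻¹ * (2 * h ^ (1 - δ)) := by
            have hA : 0 ≤ 2 * (h ^ δ / δ) * h⁻¹ := by positivity
            exact mul_le_mul_of_nonneg_left
              (mul_le_mul_of_nonneg_right h2 hd2.le) hA
        _ = 4 * (h ^ δ * h ^ (1 - δ)) / (δ * h) := by field_simp; ring
        _ = 4 / δ := by rw [h3]; field_simp
        _ ≤ 6 / δ := by gcongr <;> norm_num
    calc setAvgR (Ioo a (a+h)) (W δ) * setAvgR (Ioo a (a+h)) (fun x => (W δ x)⁻¹)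
        ≤ ENNReal.ofReal (2 * (h ^ δ / δ)) * (ENNReal.ofReal h)⁻¹
            * ENNReal.ofReal ((2 * h) ^ ((2 - δ) - 1)) := mul_le_mul' havg1 havg2
      _ ≤ ENNReal.ofReal (6 / δ) := hkey

end CommSharp

namespace CommSharp

/-- the integrand of the commutator applied to the indicator of `(0,1)`, at `x = -s` -/
def psi (s y : ℝ) : ℝ := (Real.log y - Real.log s) / (s + y)

lemma log_le_two_rpow {u : ℝ} (hu : 0 < u) : Real.log u ≤ 2 * u ^ ((1:ℝ)/2) := by
  have h1 : Real.log (u ^ ((1:ℝ)/2)) = (1/2 : ℝ) * Real.log u := Real.log_rpow hu _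
  have h2 : Real.log (u ^ ((1:ℝ)/2)) ≤ u ^ ((1:ℝ)/2) - 1 :=
    Real.log_le_sub_one_of_pos (Real.rpow_pos_of_pos hu _)
  nlinarith [Real.rpow_pos_of_pos hu ((1:ℝ)/2)]

lemma psi_meas (s : ℝ) : Measurable (psi s) := by
  unfold psi
  exact (Real.measurable_log.sub measurable_const).div
    (measurable_const.add measurable_id)

variable {s : ℝ}

lemma psi_bound_small (hs : 0 < s) {y : ℝ} (hy : 0 < y) (hys : y ≤ s) :
    -(2 * s ^ (-(1/2):ℝ) * y ^ (-(1/2):ℝ)) ≤ psi s y ∧ psi s y ≤ 0 := by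
  have hlog : Real.log y ≤ Real.log s := Real.log_le_log hy hys
  have hden : 0 < s + y := by linarith
  have key : (Real.log s - Real.log y) / (s + y) ≤ 2 * s ^ (-(1/2):ℝ) * y ^ (-(1/2):ℝ) := by
    have h2 : Real.log s - Real.log y = Real.log (s/y) := (Real.log_div hs.ne' hy.ne').symm
    have h3 : Real.log (s/y) ≤ 2 * (s/y) ^ ((1:ℝ)/2) := log_le_two_rpow (div_pos hs hy)
    have h4 : (s/y) ^ ((1:ℝ)/2) = s ^ ((1:ℝ)/2) * y ^ (-(1/2):ℝ) := by
      rw [Real.div_rpow hs.le hy.le, Real.rpow_neg hy.le, div_eq_mul_inv]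
    have h5 : s ^ ((1:ℝ)/2) / s = s ^ (-(1/2):ℝ) := by
      have : s ^ (-(1/2):ℝ) = s ^ ((1:ℝ)/2 - 1) := by norm_num
      rw [this, Real.rpow_sub hs, Real.rpow_one]
    calc (Real.log s - Real.log y) / (s + y)
        ≤ (Real.log s - Real.log y) / s := by
          apply div_le_div_of_nonneg_left (by linarith) hs (by linarith)
      _ = Real.log (s/y) / s := by rw [h2]
      _ ≤ 2 * (s/y) ^ ((1:ℝ)/2) / s := by
          apply div_le_div_of_nonneg_right h3 hs.le
      _ = 2 * (s ^ ((1:ℝ)/2) / s) * y ^ (-(1/2):ℝ) := by rw [h4]; ring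
      _ = 2 * s ^ (-(1/2):ℝ) * y ^ (-(1/2):ℝ) := by rw [h5]
  constructor
  · have : psi s y = -((Real.log s - Real.log y) / (s + y)) := by
      rw [psi, ← neg_div, neg_sub]
    rw [this]
    linarith
  · exact div_nonpos_of_nonpos_of_nonneg (by linarith) hden.le

lemma psi_intOn_small (hs : 0 < s) : IntegrableOn (psi s) (Ioo 0 s) := by
  have hg : IntegrableOn (fun y : ℝ => 2 * s ^ (-(1/2):ℝ) * y ^ (-(1/2):ℝ)) (Ioo 0 s) := by
    have h := (intervalIntegral.integrableOn_Ioo_rpow_iff (s := (-(1/2):ℝ)) hs).mpr (by norm_num)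
    exact h.const_mul _
  refine Integrable.mono' hg (psi_meas s).aestronglyMeasurable ?_
  filter_upwards [ae_restrict_mem measurableSet_Ioo] with y hy
  obtain ⟨h1, h2⟩ := psi_bound_small hs hy.1 hy.2.le
  rw [Real.norm_eq_abs, abs_le]
  have hnn : 0 ≤ 2 * s ^ (-(1/2):ℝ) * y ^ (-(1/2):ℝ) :=
    mul_nonneg (mul_nonneg (by norm_num) (Real.rpow_nonneg hs.le _)) (Real.rpow_nonneg hy.1.le _)
  exact ⟨h1, by linarith⟩

lemma psi_contOn (hs : 0 < s) {A : Set ℝ} (hA : A ⊆ Ioi 0) : ContinuousOn (psi s) A := by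
  unfold psi
  refine ContinuousOn.div (ContinuousOn.sub (Real.continuousOn_log.mono ?_) continuousOn_const)
    (continuousOn_const.add continuousOn_id) ?_
  · intro y hy
    exact ne_of_gt (hA hy)
  · intro y hy
    have h0 : (0:ℝ) < y := hA hy
    exact ne_of_gt (by linarith : (0:ℝ) < s + y)

lemma int_small_ge (hs : 0 < s) (hs1 : s < 1) :
    -4 ≤ ∫ y in Ioo (0:ℝ) s, psi s y := by
  have hrho : IntervalIntegrable (fun y : ℝ => -(2 * s ^ (-(1/2):ℝ)) * y ^ (-(1/2):ℝ))
      volume 0 s :=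
    (intervalIntegral.intervalIntegrable_rpow' (by norm_num)).const_mul _
  have hpsi : IntervalIntegrable (psi s) volume 0 s := by
    rw [intervalIntegrable_iff_integrableOn_Ioo_of_le hs.le]
    exact psi_intOn_small hs
  have hmono := intervalIntegral.integral_mono_on hs.le hrho hpsi ?_
  · have hval : ∫ y in (0:ℝ)..s, -(2 * s ^ (-(1/2):ℝ)) * y ^ (-(1/2):ℝ) = -4 := by
      rw [intervalIntegral.integral_const_mul, integral_rpow (Or.inl (by norm_num))]
      have h0 : ((0:ℝ)) ^ ((-(1/2):ℝ) + 1) = 0 := Real.zero_rpow (by norm_num)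
      rw [h0, sub_zero]
      have hm : s ^ (-(1/2):ℝ) * s ^ ((-(1/2):ℝ) + 1) = 1 := by
        rw [← Real.rpow_add hs]
        norm_num
      linear_combination (-4:ℝ) * hm
    rw [setIntegral_Ioo_eq_intervalIntegral hs.le]
    rw [hval] at hmono
    exact hmono
  · intro y hy
    rcases eq_or_lt_of_le hy.1 with h0 | h0
    · have hy0 : y = 0 := h0.symm
      subst hy0
      have hps : psi s 0 = -Real.log s / s := by
        rw [psi, Real.log_zero, zero_sub, add_zero, neg_div]
      have hls : Real.log s ≤ 0 := Real.log_nonpos hs.le hs1.le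
      have h0r : ((0:ℝ)) ^ (-(1/2):ℝ) = 0 := Real.zero_rpow (by norm_num)
      rw [hps, h0r, mul_zero]
      exact div_nonneg (by linarith) hs.le
    · have := (psi_bound_small hs h0 hy.2).1
      linarith [this]

lemma mid_integral (hs : 0 < s) (hs1 : s ≤ 1) :
    ∫ y in s..1, (Real.log y - Real.log s) / (2 * y) = (Real.log s)^2 / 4 := by
  have hF : ∀ y ∈ uIcc s 1, HasDerivAt (fun t => (Real.log t - Real.log s)^2/4)
      ((Real.log y - Real.log s)/(2*y)) y := by
    intro y hy
    rw [uIcc_of_le hs1] at hy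
    have hy0 : 0 < y := lt_of_lt_of_le hs hy.1
    have h1 : HasDerivAt (fun t => Real.log t - Real.log s) y⁻¹ y :=
      (Real.hasDerivAt_log hy0.ne').sub_const _
    have h2 := (h1.pow 2).div_const 4
    refine h2.congr_deriv ?_
    field_simp
    ring
  have hcont : IntervalIntegrable (fun y => (Real.log y - Real.log s)/(2*y)) volume s 1 := by
    apply ContinuousOn.intervalIntegrable
    rw [uIcc_of_le hs1]
    refine ContinuousOn.div (ContinuousOn.sub (Real.continuousOn_log.mono ?_) continuousOn_const)
      (continuousOn_const.mul continuousOn_id) ?_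
    · intro y hy
      exact ne_of_gt (lt_of_lt_of_le hs hy.1)
    · intro y hy
      have h0 : (0:ℝ) < y := lt_of_lt_of_le hs hy.1
      exact ne_of_gt (by linarith : (0:ℝ) < 2 * y)
  rw [intervalIntegral.integral_eq_sub_of_hasDerivAt hF hcont]
  rw [Real.log_one]
  ring

lemma int_mid_ge (hs : 0 < s) (hs1 : s < 1) :
    (Real.log s)^2/4 ≤ ∫ y in Ico s 1, psi s y := by
  have hIco : ∫ y in Ico s 1, psi s y = ∫ y in s..1, psi s y := by
    rw [intervalIntegral.integral_of_le hs1.le, integral_Ioc_eq_integral_Ioo,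
      ← MeasureTheory.integral_Ico_eq_integral_Ioo]
  rw [hIco, ← mid_integral hs hs1.le]
  have hglow : IntervalIntegrable (fun y => (Real.log y - Real.log s)/(2*y)) volume s 1 := by
    apply ContinuousOn.intervalIntegrable
    rw [uIcc_of_le hs1.le]
    refine ContinuousOn.div (ContinuousOn.sub (Real.continuousOn_log.mono ?_) continuousOn_const)
      (continuousOn_const.mul continuousOn_id) ?_
    · intro y hy
      exact ne_of_gt (lt_of_lt_of_le hs hy.1)
    · intro y hy
      have h0 : (0:ℝ) < y := lt_of_lt_of_le hs hy.1
      exact ne_of_gt (by linarith : (0:ℝ) < 2 * y)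
  have hpsi : IntervalIntegrable (psi s) volume s 1 := by
    apply ContinuousOn.intervalIntegrable
    rw [uIcc_of_le hs1.le]
    exact psi_contOn hs fun y hy => lt_of_lt_of_le hs hy.1
  refine intervalIntegral.integral_mono_on hs1.le hglow hpsi ?_
  intro y hy
  have hy0 : 0 < y := lt_of_lt_of_le hs hy.1
  have hnum : 0 ≤ Real.log y - Real.log s := by
    have := Real.log_le_log hs hy.1
    linarith
  have hy1 := hy.1
  have hy2 := hy.2
  rw [psi]
  apply div_le_div_of_nonneg_left hnum (by linarith) (by linarith)

lemma I_ge (hs : 0 < s) (hs6 : s ≤ Real.exp (-6)) :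
    (Real.log s)^2/8 ≤ ∫ y in Ioo (0:ℝ) 1, psi s y := by
  have hexp1 : Real.exp (-6:ℝ) < 1 := Real.exp_lt_one_iff.mpr (by norm_num)
  have hs1 : s < 1 := lt_of_le_of_lt hs6 hexp1
  have hunion : Ioo (0:ℝ) s ∪ Ico s 1 = Ioo (0:ℝ) 1 := Ioo_union_Ico_eq_Ioo hs hs1.le
  have hdisj : Disjoint (Ioo (0:ℝ) s) (Ico s 1) := by
    rw [Set.disjoint_left]
    intro y hy1 hy2
    exact absurd hy2.1 (not_le.mpr hy1.2)
  have hint1 : IntegrableOn (psi s) (Ioo 0 s) := psi_intOn_small hs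
  have hint2 : IntegrableOn (psi s) (Ico s 1) := by
    refine (ContinuousOn.integrableOn_Icc ?_).mono_set Ico_subset_Icc_self
    exact psi_contOn hs fun y hy => lt_of_lt_of_le hs hy.1
  have hsplit : ∫ y in Ioo (0:ℝ) 1, psi s y
      = (∫ y in Ioo (0:ℝ) s, psi s y) + ∫ y in Ico s 1, psi s y := by
    rw [← hunion, setIntegral_union hdisj measurableSet_Ico hint1 hint2]
  have hL : Real.log s ≤ -6 := by
    have := Real.log_le_log hs hs6
    rwa [Real.log_exp] at this
  have h1 := int_small_ge hs hs1
  have h2 := int_mid_ge hs hs1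
  rw [hsplit]
  nlinarith [sq_nonneg (Real.log s)]

end CommSharp

namespace CommSharp

/-- the test function -/
def F : ℝ → ℝ := (Ioo (0:ℝ) 1).indicator fun _ => (1:ℝ)

lemma pv_eq {x : ℝ} (hx1 : -1 < x) (hx2 : x < 0) :
    pvCommH (fun t => Real.log |t|) F x = ∫ y in Ioo (0:ℝ) 1, psi (-x) y := by
  have hs : 0 < -x := by linarith
  have key : ∀ ε ∈ Ioo (0:ℝ) (-x),
      (∫ y in {y : ℝ | ε < |x - y|}, (Real.log |x| - Real.log |y|) * F y / (x - y))
        = ∫ y in Ioo (0:ℝ) 1, psi (-x) y := by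
    intro ε hε
    have hfun : (fun y => (Real.log |x| - Real.log |y|) * F y / (x - y))
        = (Ioo (0:ℝ) 1).indicator (psi (-x)) := by
      funext y
      by_cases hy : y ∈ Ioo (0:ℝ) 1
      · rw [indicator_of_mem hy]
        have h1 : F y = 1 := indicator_of_mem hy _
        rw [h1, mul_one]
        have hy0 : 0 < y := hy.1
        rw [abs_of_pos hy0, abs_of_neg hx2]
        have hxy : x - y = -((-x) + y) := by ring
        rw [hxy, div_neg, ← neg_div, neg_sub]
        rfl
      · rw [indicator_of_notMem hy]
        have h1 : F y = 0 := indicator_of_notMem hy _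
        rw [h1, mul_zero, zero_div]
    rw [hfun, setIntegral_indicator measurableSet_Ioo]
    have hsub : Ioo (0:ℝ) 1 ⊆ {y : ℝ | ε < |x - y|} := ?_
    · rw [Set.inter_eq_right.mpr hsub]
    intro y hy
    have : |x - y| = y - x := by
      rw [abs_of_neg (by linarith [hy.1] : x - y < 0)]
      ring
    rw [mem_setOf_eq, this]
    have := hε.2
    linarith [hy.1]
  unfold pvCommH
  apply Filter.Tendsto.limUnder_eq
  apply Filter.Tendsto.congr' _ tendsto_const_nhds
  filter_upwards [Ioo_mem_nhdsGT_of_mem (by constructor <;> [rfl; exact hs] : (0:ℝ) ∈ Ico 0 (-x))] with ε hε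
  exact (key ε hε).symm

end CommSharp

namespace CommSharp

variable {δ : ℝ}

lemma wNorm_F (hδ : 0 < δ) : wNormR 2 (W δ) F = (ENNReal.ofReal (1/δ)) ^ ((1:ℝ)/2) := by
  unfold wNormR
  congr 1
  have hfun : (fun x => (ENNReal.ofReal |F x|) ^ (2:ℝ) * ENNReal.ofReal (W δ x))
      = (Ioo (0:ℝ) 1).indicator (fun x => ENNReal.ofReal (W δ x)) := by
    funext x
    by_cases hx : x ∈ Ioo (0:ℝ) 1
    · rw [indicator_of_mem hx]
      have h1 : F x = 1 := indicator_of_mem hx _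
      rw [h1]
      norm_num
    · rw [indicator_of_notMem hx]
      have h1 : F x = 0 := indicator_of_notMem hx _
      rw [h1]
      rw [abs_zero, ENNReal.ofReal_zero, ENNReal.zero_rpow_of_pos (by norm_num), zero_mul]
  rw [hfun, lintegral_indicator measurableSet_Ioo, setLIntegral_W_Ioo01 hδ]

lemma A2_ge (hδ : 0 < δ) (hδ1 : δ < 1) :
    ENNReal.ofReal (1/δ) * ENNReal.ofReal (1/(2-δ)) ≤ A2constR (W δ) := by
  have key : setAvgR (Ioo (0:ℝ) (0+1)) (W δ) * setAvgR (Ioo (0:ℝ) (0+1)) (fun x => (W δ x)⁻¹)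
      = ENNReal.ofReal (1/δ) * ENNReal.ofReal (1/(2-δ)) := by
    have h1 : (0:ℝ) + 1 = 1 := by norm_num
    rw [h1]
    unfold setAvgR
    rw [Real.volume_Ioo, setLIntegral_W_Ioo01 hδ, setLIntegral_Winv_Ioo01 hδ1]
    norm_num
  exact le_iSup_of_le 0 (le_iSup_of_le 1 (le_iSup_of_le one_pos key.ge))

lemma neg_inv_integral {a b : ℝ} (ha : 0 < a) (hab : a ≤ b) :
    ∫ x in Ioo (-b) (-a), (-x)⁻¹ = Real.log b - Real.log a := by
  rw [setIntegral_Ioo_eq_intervalIntegral (by linarith)]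
  have hF : ∀ x ∈ uIcc (-b) (-a), HasDerivAt (fun t : ℝ => -Real.log (-t)) ((-x)⁻¹) x := by
    intro x hxx
    rw [uIcc_of_le (by linarith)] at hxx
    have hx0 : -x ≠ 0 := by
      have := hxx.2
      have hx : x < 0 := lt_of_le_of_lt this (by linarith)
      intro h
      nlinarith [neg_pos.mpr hx]
    have h1 : HasDerivAt (fun t : ℝ => -t) (-1) x := (hasDerivAt_id x).neg
    have h2 := (Real.hasDerivAt_log hx0).comp x h1
    have h3 := h2.neg
    have hxne : x ≠ 0 := fun h => hx0 (by rw [h, neg_zero])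
    refine h3.congr_deriv ?_
    ring
  have hcont : IntervalIntegrable (fun x : ℝ => (-x)⁻¹) volume (-b) (-a) := by
    apply ContinuousOn.intervalIntegrable
    refine ContinuousOn.inv₀ (continuousOn_id.neg) ?_
    intro x hxx
    rw [uIcc_of_le (by linarith)] at hxx
    have hx : x < 0 := lt_of_le_of_lt hxx.2 (by linarith)
    exact ne_of_gt (show (0:ℝ) < -x by linarith)
  rw [intervalIntegral.integral_eq_sub_of_hasDerivAt hF hcont]
  rw [neg_neg, neg_neg]
  ring

lemma comm_lintegral_lb (hδ : 0 < δ) (hδ6 : δ ≤ 1/6) :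
    ENNReal.ofReal ((1/(8*δ^2))^2 * Real.exp (-2) * (1/δ))
      ≤ ∫⁻ x, (ENNReal.ofReal |pvCommH (fun t => Real.log |t|) F x|) ^ (2:ℝ)
          * ENNReal.ofReal (W δ x) := by
  set a := Real.exp (-(2/δ)) with ha_def
  set b := Real.exp (-(1/δ)) with hb_def
  have ha : 0 < a := Real.exp_pos _
  have hb : 0 < b := Real.exp_pos _
  have hd6 : (6:ℝ) ≤ 1/δ := by
    rw [le_div_iff₀ hδ]; linarith
  have hab : a < b := by
    rw [ha_def, hb_def]
    apply Real.exp_lt_exp.mpr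
    have h2 : 2/δ = 2*(1/δ) := by ring
    have : (0:ℝ) < 1/δ := by linarith
    rw [h2]
    linarith
  have hb6 : b ≤ Real.exp (-6) := by
    rw [hb_def]
    apply Real.exp_le_exp.mpr
    linarith
  have hb1 : b < 1 := lt_of_le_of_lt hb6 (Real.exp_lt_one_iff.mpr (by norm_num))
  set c := 1/(8*δ^2) with hc_def
  have hc : 0 < c := by rw [hc_def]; positivity
  -- pointwise bound on E
  have hpt : ∀ x ∈ Ioo (-b) (-a),
      ENNReal.ofReal (c^2 * (Real.exp (-2) * (-x)⁻¹))
        ≤ (ENNReal.ofReal |pvCommH (fun t => Real.log |t|) F x|) ^ (2:ℝ)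
          * ENNReal.ofReal (W δ x) := by
    intro x hx
    have hx0 : x < 0 := lt_trans hx.2 (by linarith)
    have hs : 0 < -x := by linarith
    have hsa : a ≤ -x := le_of_lt (by linarith [hx.2])
    have hsb : -x ≤ b := le_of_lt (by linarith [hx.1])
    have hx1 : -1 < x := by linarith
    -- commutator lower bound
    have hP := I_ge hs (le_trans hsb hb6)
    rw [← pv_eq hx1 hx0] at hP
    have hlog : Real.log (-x) ≤ -(1/δ) := by
      calc Real.log (-x) ≤ Real.log b := Real.log_le_log hs hsb
        _ = -(1/δ) := by rw [hb_def, Real.log_exp]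
    have hlogsq : (1/δ)^2 ≤ (Real.log (-x))^2 := by nlinarith
    have hPc : c ≤ |pvCommH (fun t => Real.log |t|) F x| := by
      have h1 : c ≤ (Real.log (-x))^2 / 8 := by
        rw [hc_def]
        rw [div_le_div_iff₀ (by positivity) (by norm_num)]
        calc 1 * 8 = 8 * (1/δ)^2 * δ^2 := by field_simp
          _ ≤ 8 * (Real.log (-x))^2 * δ^2 := by nlinarith [sq_nonneg δ]
          _ = (Real.log (-x))^2 * (8 * δ^2) := by ring
      calc c ≤ (Real.log (-x))^2/8 := h1
        _ ≤ pvCommH (fun t => Real.log |t|) F x := hP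
        _ ≤ |pvCommH (fun t => Real.log |t|) F x| := le_abs_self _
    -- weight lower bound
    have hW : Real.exp (-2) * (-x)⁻¹ ≤ W δ x := by
      rw [W_of_ne (ne_of_lt hx0), abs_of_neg hx0]
      have h1 : (-x) ^ (δ - 1) = (-x) ^ δ / (-x) := by
        rw [Real.rpow_sub hs, Real.rpow_one]
      have h2 : Real.exp (-2) ≤ (-x) ^ δ := by
        have h3 : a ^ δ ≤ (-x) ^ δ := Real.rpow_le_rpow ha.le hsa hδ.le
        have h4 : a ^ δ = Real.exp (-2) := by
          rw [ha_def, ← Real.exp_one_rpow (-(2/δ)), ← Real.rpow_mul (Real.exp_pos 1).le,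
            Real.exp_one_rpow]
          congr 1
          field_simp
        rw [← h4]; exact h3
      rw [h1, div_eq_mul_inv]
      exact mul_le_mul_of_nonneg_right h2 (inv_nonneg.mpr hs.le)
    calc ENNReal.ofReal (c^2 * (Real.exp (-2) * (-x)⁻¹))
        = ENNReal.ofReal (c^2) * ENNReal.ofReal (Real.exp (-2) * (-x)⁻¹) :=
          ENNReal.ofReal_mul (by positivity)
      _ ≤ (ENNReal.ofReal |pvCommH (fun t => Real.log |t|) F x|) ^ (2:ℝ)
          * ENNReal.ofReal (W δ x) := by
          apply mul_le_mul'
          · rw [ENNReal.ofReal_pow hc.le, ← ENNReal.rpow_natCast (ENNReal.ofReal c) 2]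
            push_cast
            exact ENNReal.rpow_le_rpow (ENNReal.ofReal_le_ofReal hPc) (by norm_num)
          · exact ENNReal.ofReal_le_ofReal hW
  -- integral of the lower bound
  have hgint : IntegrableOn (fun x => c^2 * (Real.exp (-2) * (-x)⁻¹)) (Ioo (-b) (-a)) := by
    refine ((ContinuousOn.integrableOn_Icc ?_).mono_set Ioo_subset_Icc_self)
    refine (continuousOn_const.mul (continuousOn_const.mul (ContinuousOn.inv₀ continuousOn_id.neg ?_)))
    intro x hxx
    have hx : x < 0 := lt_of_le_of_lt hxx.2 (by linarith)
    exact ne_of_gt (show (0:ℝ) < -x by linarith)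
  have hgval : ∫ x in Ioo (-b) (-a), c^2 * (Real.exp (-2) * (-x)⁻¹)
      = c^2 * Real.exp (-2) * (1/δ) := by
    rw [MeasureTheory.integral_const_mul, MeasureTheory.integral_const_mul,
      neg_inv_integral ha hab.le]
    rw [ha_def, hb_def, Real.log_exp, Real.log_exp]
    ring
  calc ENNReal.ofReal ((1/(8*δ^2))^2 * Real.exp (-2) * (1/δ))
      = ENNReal.ofReal (∫ x in Ioo (-b) (-a), c^2 * (Real.exp (-2) * (-x)⁻¹)) := by
        rw [hgval, hc_def]
    _ = ∫⁻ x in Ioo (-b) (-a), ENNReal.ofReal (c^2 * (Real.exp (-2) * (-x)⁻¹)) := by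
        apply ofReal_integral_eq_lintegral_ofReal hgint
        filter_upwards [ae_restrict_mem measurableSet_Ioo] with x hx
        have hx0 : x < 0 := lt_trans hx.2 (by linarith)
        exact mul_nonneg (sq_nonneg c) (mul_nonneg (Real.exp_pos _).le
          (inv_nonneg.mpr (by linarith)))
    _ ≤ ∫⁻ x in Ioo (-b) (-a),
          (ENNReal.ofReal |pvCommH (fun t => Real.log |t|) F x|) ^ (2:ℝ)
            * ENNReal.ofReal (W δ x) := setLIntegral_mono' measurableSet_Ioo hpt
    _ ≤ ∫⁻ x, (ENNReal.ofReal |pvCommH (fun t => Real.log |t|) F x|) ^ (2:ℝ)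
            * ENNReal.ofReal (W δ x) := setLIntegral_le_lintegral _ _

end CommSharp


open CommSharp

/-- For `b(x) = log|x|` and `H` the Hilbert transform: for every increasing
`φ : [1,∞) → [0,∞)` with `t²/φ(t) → ∞` and every `C > 0` there are a weight `w ∈ A₂` on `ℝ`
and `f` with `0 < ‖f‖_{L²(w)} < ∞` such that
`‖[b,H]f‖_{L²(w)} > C φ([w]_{A₂}) ‖f‖_{L²(w)}`; consequently
`sup_{w ∈ A₂} ‖[b,H]‖_{L²(w)→L²(w)}/φ([w]_{A₂}) = ∞`. -/
theorem commutator_hilbert_sharpness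
    (φ : ℝ → ℝ) (hφmono : MonotoneOn φ (Set.Ici 1)) (hφpos : ∀ t, 1 ≤ t → 0 ≤ φ t)
    (hφlim : Filter.Tendsto (fun t : ℝ => t ^ 2 / φ t) Filter.atTop Filter.atTop)
    (C : ℝ) (hC : 0 < C) :
    ∃ w : ℝ → ℝ, (∀ x, 0 < w x) ∧ LocallyIntegrable w ∧ A2constR w < ⊤ ∧
      ∃ f : ℝ → ℝ, 0 < wNormR 2 w f ∧ wNormR 2 w f < ⊤ ∧
        ENNReal.ofReal (C * φ ((A2constR w).toReal)) * wNormR 2 w f <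
          wNormR 2 w (pvCommH (fun x => Real.log |x|) f) := by
  classical
  have hE : (0:ℝ) < Real.exp 1 := Real.exp_pos 1
  set M₀ : ℝ := 288 * Real.exp 1 * C + 1 with hM0_def
  have hM0 : 0 < M₀ := by nlinarith
  have hev := Filter.tendsto_atTop.mp hφlim M₀
  rw [Filter.eventually_atTop] at hev
  obtain ⟨T, hT⟩ := hev
  set T₀ : ℝ := max T 36 with hT0_def
  have hT0 : 36 ≤ T₀ := le_max_right _ _
  have hT0pos : 0 < T₀ := by linarith
  set δ : ℝ := 6 / T₀ with hδ_def
  have hδpos : 0 < δ := by rw [hδ_def]; positivity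
  have hδ6 : δ ≤ 1/6 := by
    rw [hδ_def, div_le_div_iff₀ hT0pos (by norm_num)]
    linarith
  have hδ1 : δ < 1 := by linarith
  have h6δ : 6/δ = T₀ := by rw [hδ_def]; field_simp
  refine ⟨W δ, W_pos δ, locallyIntegrable_W hδpos, ?_, F, ?_, ?_, ?_⟩
  · exact lt_of_le_of_lt (A2_le hδpos hδ1.le) ENNReal.ofReal_lt_top
  · rw [wNorm_F hδpos]
    exact ENNReal.rpow_pos (ENNReal.ofReal_pos.mpr (by positivity)) ENNReal.ofReal_ne_top
  · rw [wNorm_F hδpos]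
    exact ENNReal.rpow_lt_top_of_nonneg (by norm_num) ENNReal.ofReal_ne_top
  · set A := (A2constR (W δ)).toReal with hA_def
    have hA2top : A2constR (W δ) ≠ ⊤ :=
      (lt_of_le_of_lt (A2_le hδpos hδ1.le) ENNReal.ofReal_lt_top).ne
    have hAle : A ≤ T₀ := by
      have h := ENNReal.toReal_mono ENNReal.ofReal_ne_top (A2_le hδpos hδ1.le)
      rw [ENNReal.toReal_ofReal (by positivity)] at h
      rw [h6δ] at h
      exact h
    have hAge : 1 ≤ A := by
      have h1 := A2_ge hδpos hδ1
      rw [← ENNReal.ofReal_mul (by positivity)] at h1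
      have h2 := ENNReal.toReal_mono hA2top h1
      have h2δ : (0:ℝ) < 2 - δ := by linarith
      rw [ENNReal.toReal_ofReal (by positivity)] at h2
      have hpos : 0 < δ * (2 - δ) := by nlinarith
      have h3 : (1:ℝ) ≤ 1/δ * (1/(2-δ)) := by
        rw [div_mul_div_comm, one_mul]
        rw [le_div_iff₀ hpos]
        nlinarith [sq_nonneg (1-δ)]
      linarith
    have ht := hT T₀ (le_max_left _ _)
    have hT1 : (1:ℝ) ≤ T₀ := by linarith
    have hφT0 : 0 < φ T₀ := by
      rcases lt_or_ge 0 (φ T₀) with h | h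
      · exact h
      · have h0 : φ T₀ = 0 := le_antisymm h (hφpos T₀ hT1)
        rw [h0] at ht
        norm_num at ht
        linarith
    have hφle : φ T₀ ≤ T₀^2 / M₀ := by
      rw [le_div_iff₀ hφT0] at ht
      rw [le_div_iff₀ hM0]
      linarith [mul_comm (φ T₀) M₀]
    have hφA : φ A ≤ φ T₀ := hφmono hAge (le_trans hAge hAle) hAle
    set u := C * φ A with hu_def
    have hu0 : 0 ≤ u := mul_nonneg hC.le (hφpos A hAge)
    have hub : u < Real.exp (-1) / (8 * δ^2) := by
      have hEE : Real.exp (-1) * Real.exp 1 = 1 := by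
        rw [← Real.exp_add]; norm_num
      have hEneg : 0 < Real.exp (-1) := Real.exp_pos _
      have hT0sq : T₀^2 = 36/δ^2 := by
        rw [← h6δ]
        field_simp
        norm_num
      have hkey : 36 * C / M₀ < Real.exp (-1) / 8 := by
        rw [div_lt_div_iff₀ hM0 (by norm_num)]
        nlinarith
      have hδ2 : (0:ℝ) < 1/δ^2 := by positivity
      calc u ≤ C * (T₀^2/M₀) := by
            have := le_trans hφA hφle
            rw [hu_def]
            exact mul_le_mul_of_nonneg_left this hC.le
        _ = (36 * C / M₀) * (1/δ^2) := by rw [hT0sq]; ring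
        _ < (Real.exp (-1) / 8) * (1/δ^2) := mul_lt_mul_of_pos_right hkey hδ2
        _ = Real.exp (-1) / (8 * δ^2) := by ring
    rw [wNorm_F hδpos]
    simp only [wNormR]
    have e1 : ENNReal.ofReal (u^2 * (1/δ)) ^ ((1:ℝ)/2)
        = ENNReal.ofReal u * (ENNReal.ofReal (1/δ)) ^ ((1:ℝ)/2) := by
      rw [ENNReal.ofReal_mul (sq_nonneg u), ENNReal.mul_rpow_of_nonneg _ _ (by norm_num)]
      congr 1
      rw [ENNReal.ofReal_pow hu0, ← ENNReal.rpow_natCast (ENNReal.ofReal u) 2,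
        ← ENNReal.rpow_mul]
      norm_num
    have hKpos : (0:ℝ) < (1/(8*δ^2))^2 * Real.exp (-2) * (1/δ) := by positivity
    have hreal : u^2 * (1/δ) < (1/(8*δ^2))^2 * Real.exp (-2) * (1/δ) := by
      have h2 : u^2 < (1/(8*δ^2))^2 * Real.exp (-2) := by
        have hE2 : Real.exp (-1) * Real.exp (-1) = Real.exp (-2) := by
          rw [← Real.exp_add]; norm_num
        have hb2 : (0:ℝ) < Real.exp (-1)/(8*δ^2) := by positivity
        have h3 : u * u < (Real.exp (-1)/(8*δ^2)) * (Real.exp (-1)/(8*δ^2)) :=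
          mul_lt_mul'' hub hub hu0 hu0
        have h4 : (Real.exp (-1)/(8*δ^2)) * (Real.exp (-1)/(8*δ^2))
            = (1/(8*δ^2))^2 * Real.exp (-2) := by
          rw [← hE2]
          field_simp
        rw [sq, ← h4]
        exact h3
      exact mul_lt_mul_of_pos_right h2 (by positivity)
    calc ENNReal.ofReal (C * φ A) * (ENNReal.ofReal (1/δ)) ^ ((1:ℝ)/2)
        = ENNReal.ofReal (u^2 * (1/δ)) ^ ((1:ℝ)/2) := e1.symm
      _ < ENNReal.ofReal ((1/(8*δ^2))^2 * Real.exp (-2) * (1/δ)) ^ ((1:ℝ)/2) := by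
          apply ENNReal.rpow_lt_rpow _ (by norm_num)
          exact (ENNReal.ofReal_lt_ofReal_iff hKpos).mpr hreal
      _ ≤ (∫⁻ x, (ENNReal.ofReal |pvCommH (fun t => Real.log |t|) F x|) ^ (2:ℝ)
            * ENNReal.ofReal (W δ x)) ^ ((1:ℝ)/2) :=
          ENNReal.rpow_le_rpow (comm_lintegral_lb hδpos hδ6) (by norm_num)
end
end

section
/- Let n ≥ 1, j ∈ {1,…,n}, let k ≥ 1 be an integer, and let 0 < δ < 1. Set E = (0,1)^n ∩ B(0,1) and Ω = { x ∈ ℝ^n : |x| > 1 and x_i < 0 for all i = 1,…,n }. There exists a constant c = c(n) > 0, depending only on n (the surface measure of E ∩ S^{n−1}), such that for every x ∈ Ω: ∫_E |x_j − y_j| (log(|x|/|y|))^k |y|^{δ−n} |x−y|^{−(n+1)} dy ≥ c · k! · |x_j| / ( δ^{k+1} (|x|+1)^{n+1} ). (The left-hand side equals |R^k_{j,b} f(x)| for b(y) = log|y|, f(y) = |y|^{δ−n} 1_E(y), and R^k_{j,b} the k-th order commutator of the j-th Riesz transform.) -/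
open MeasureTheory ENNReal Set

noncomputable section

lemma one_dim_integral (k : ℕ) {γ : ℝ} (hγ : 0 < γ) :
    ∫ t in Ioi (0:ℝ), t ^ (k:ℝ) * Real.exp (-(γ * t)) =
      (k.factorial : ℝ) / γ ^ (k + 1) := by
  have h := Real.integral_rpow_mul_exp_neg_mul_Ioi (a := (k:ℝ)+1) (r := γ)
    (by positivity) hγ
  rw [show (k:ℝ) + 1 - 1 = (k:ℝ) by ring] at h
  rw [h, Real.Gamma_nat_eq_factorial]
  rw [show (k:ℝ) + 1 = ((k+1 : ℕ) : ℝ) by push_cast; ring, Real.rpow_natCast]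
  rw [div_pow, one_pow, div_mul_eq_mul_div, one_mul]

lemma one_dim_integrable (k : ℕ) {γ : ℝ} (hγ : 0 < γ) :
    IntegrableOn (fun t : ℝ => t ^ (k:ℝ) * Real.exp (-(γ * t))) (Ioi 0) := by
  have h0 : IntegrableOn (fun x : ℝ => Real.exp (-x) * x ^ ((k:ℝ)+1-1)) (Ioi 0) :=
    Real.GammaIntegral_convergent (by positivity)
  have h1 : IntegrableOn (fun t : ℝ => Real.exp (-(γ*t)) * (γ*t) ^ ((k:ℝ)+1-1)) (Ioi 0) := by
    have := (integrableOn_Ioi_comp_mul_left_iff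
      (fun x : ℝ => Real.exp (-x) * x ^ ((k:ℝ)+1-1)) 0 hγ).mpr
    simpa using this (by simpa using h0)
  have h2 : IntegrableOn (fun t : ℝ => γ ^ (k:ℝ) * (t ^ (k:ℝ) * Real.exp (-(γ*t)))) (Ioi 0) := by
    refine MeasureTheory.IntegrableOn.congr_fun h1 (fun t ht => ?_) measurableSet_Ioi
    rw [mem_Ioi] at ht
    show Real.exp (-(γ*t)) * (γ*t) ^ ((k:ℝ)+1-1) = _
    rw [show (k:ℝ) + 1 - 1 = (k:ℝ) by ring, Real.mul_rpow hγ.le ht.le]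
    ring
  have h3 := h2.const_mul (γ ^ (k:ℝ))⁻¹
  refine MeasureTheory.IntegrableOn.congr_fun h3 (fun t ht => ?_) measurableSet_Ioi
  show (γ ^ (k:ℝ))⁻¹ * (γ ^ (k:ℝ) * (t ^ (k:ℝ) * Real.exp (-(γ * t)))) = _
  have : γ ^ (k:ℝ) ≠ 0 := by positivity
  field_simp


lemma iUnion_Ioc : (⋃ m : ℕ, Ioc (m:ℝ) (m+1)) = Ioi 0 := by
  ext x
  simp only [mem_iUnion, mem_Ioc, mem_Ioi]
  constructor
  · rintro ⟨m, hm, _⟩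
    exact lt_of_le_of_lt (Nat.cast_nonneg m) hm
  · intro hx
    refine ⟨⌈x⌉₊ - 1, ?_, ?_⟩
    · have h1 : (1:ℕ) ≤ ⌈x⌉₊ := Nat.one_le_iff_ne_zero.mpr (Nat.ceil_pos.mpr hx).ne'
      have := Nat.ceil_lt_add_one hx.le
      push_cast [h1]
      linarith
    · have h1 : (1:ℕ) ≤ ⌈x⌉₊ := Nat.one_le_iff_ne_zero.mpr (Nat.ceil_pos.mpr hx).ne'
      have := Nat.le_ceil x
      push_cast [h1]
      linarith

lemma one_dim_sum (k : ℕ) {γ : ℝ} (hγ : 0 < γ) :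
    ENNReal.ofReal (Real.exp (-γ) * ((k.factorial : ℝ) / γ ^ (k + 1))) ≤
      ∑' m : ℕ, ENNReal.ofReal ((m + 1 : ℝ) ^ k * Real.exp (-(γ * (m + 1)))) := by
  have key : ENNReal.ofReal ((k.factorial : ℝ) / γ ^ (k + 1)) ≤
      ∑' m : ℕ, ENNReal.ofReal ((m + 1 : ℝ) ^ k * Real.exp (-(γ * m))) := by
    have h1 : ENNReal.ofReal ((k.factorial : ℝ) / γ ^ (k + 1)) =
        ∫⁻ t in Ioi (0:ℝ), ENNReal.ofReal (t ^ (k:ℝ) * Real.exp (-(γ * t))) := by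
      rw [← one_dim_integral k hγ]
      refine ofReal_integral_eq_lintegral_ofReal (one_dim_integrable k hγ) ?_
      filter_upwards [ae_restrict_mem measurableSet_Ioi] with t ht
      have : (0:ℝ) < t := ht
      positivity
    rw [h1, ← iUnion_Ioc, lintegral_iUnion (fun m => measurableSet_Ioc)
      (fun i j hij => ?_)]
    · refine ENNReal.tsum_le_tsum fun m => ?_
      have : ∫⁻ t in Ioc (m:ℝ) (m+1), ENNReal.ofReal (t ^ (k:ℝ) * Real.exp (-(γ * t)))
          ≤ ∫⁻ _ in Ioc (m:ℝ) (m+1),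
            ENNReal.ofReal ((m + 1 : ℝ) ^ k * Real.exp (-(γ * m))) := by
        refine setLIntegral_mono' measurableSet_Ioc fun t ht => ?_
        rcases ht with ⟨ht1, ht2⟩
        have ht0 : (0:ℝ) < t := lt_of_le_of_lt (Nat.cast_nonneg m) ht1
        refine ENNReal.ofReal_le_ofReal ?_
        rw [Real.rpow_natCast]
        have e1 : t ^ k ≤ (m+1:ℝ) ^ k := pow_le_pow_left₀ ht0.le ht2 k
        have e2 : Real.exp (-(γ * t)) ≤ Real.exp (-(γ * m)) := by
          apply Real.exp_le_exp.mpr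
          nlinarith
        exact mul_le_mul e1 e2 (Real.exp_pos _).le (by positivity)
      refine this.trans ?_
      rw [setLIntegral_const, Real.volume_Ioc]
      simp
    · simp only [Function.onFun]
      refine Set.disjoint_left.mpr fun x hx hx' => ?_
      rcases hij.lt_or_gt with h | h
      · have : (i:ℝ) + 1 ≤ j := by exact_mod_cast Nat.succ_le_of_lt h
        exact (hx.2.trans this).not_gt hx'.1
      · have : (j:ℝ) + 1 ≤ i := by exact_mod_cast Nat.succ_le_of_lt h
        exact (hx'.2.trans this).not_gt hx.1
  calc ENNReal.ofReal (Real.exp (-γ) * ((k.factorial : ℝ) / γ ^ (k + 1)))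
      = ENNReal.ofReal (Real.exp (-γ)) * ENNReal.ofReal ((k.factorial : ℝ) / γ ^ (k + 1)) := by
        rw [ENNReal.ofReal_mul (Real.exp_pos _).le]
    _ ≤ ENNReal.ofReal (Real.exp (-γ)) *
        ∑' m : ℕ, ENNReal.ofReal ((m + 1 : ℝ) ^ k * Real.exp (-(γ * m))) := by
        exact mul_le_mul_right key _
    _ = ∑' m : ℕ, ENNReal.ofReal ((m + 1 : ℝ) ^ k * Real.exp (-(γ * (m+1)))) := by
        rw [← ENNReal.tsum_mul_left]
        congr 1
        ext m
        rw [← ENNReal.ofReal_mul (Real.exp_pos _).le]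
        congr 1
        have : Real.exp (-(γ*(m+1))) = Real.exp (-(γ*m)) * Real.exp (-γ) := by
          rw [← Real.exp_add]; ring_nf
        rw [this]; ring

lemma abs_coord_le_norm {n : ℕ} (y : EuclideanSpace ℝ (Fin n)) (i : Fin n) :
    |y i| ≤ ‖y‖ := by
  rw [EuclideanSpace.norm_eq]
  have h1 : |y i|^2 ≤ ∑ i', ‖y i'‖^2 := by
    have := Finset.single_le_sum (f := fun i' => ‖y i'‖^2)
      (fun _ _ => sq_nonneg _) (Finset.mem_univ i)
    simpa [Real.norm_eq_abs, sq_abs] using this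
  calc |y i| = Real.sqrt (|y i|^2) := by rw [Real.sqrt_sq_eq_abs, abs_abs]
    _ ≤ _ := Real.sqrt_le_sqrt h1

lemma norm_lt_of_coords {n : ℕ} (hn : 1 ≤ n) (y : EuclideanSpace ℝ (Fin n)) {b : ℝ}
    (h : ∀ i, |y i| < b) : ‖y‖ < Real.sqrt n * b := by
  haveI : Nonempty (Fin n) := Fin.pos_iff_nonempty.mp hn
  have hb : 0 < b := (abs_nonneg _).trans_lt (h (Classical.arbitrary _))
  rw [EuclideanSpace.norm_eq]
  have hsum : ∑ i, ‖y i‖^2 < (n : ℝ) * b^2 := by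
    calc ∑ i, ‖y i‖^2 < ∑ _i : Fin n, b^2 :=
          Finset.sum_lt_sum_of_nonempty Finset.univ_nonempty
            (fun i _ => by
              have := h i
              rw [Real.norm_eq_abs]
              nlinarith [abs_nonneg (y i)])
      _ = (n : ℝ) * b^2 := by simp [Finset.card_univ]
  calc Real.sqrt (∑ i, ‖y i‖^2) < Real.sqrt ((n:ℝ) * b^2) :=
        Real.sqrt_lt_sqrt (Finset.sum_nonneg fun _ _ => sq_nonneg _) hsum
    _ = Real.sqrt n * b := by
        rw [Real.sqrt_mul (Nat.cast_nonneg n), Real.sqrt_sq hb.le]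

lemma cube_volume {n : ℕ} {a b : ℝ} (hab : a ≤ b) :
    volume {y : EuclideanSpace ℝ (Fin n) | ∀ i, y i ∈ Ioo a b} =
      ENNReal.ofReal ((b - a)^n) := by
  have hQ : {y : EuclideanSpace ℝ (Fin n) | ∀ i, y i ∈ Ioo a b} =
      (MeasurableEquiv.toLp 2 (Fin n → ℝ)).symm ⁻¹' (univ.pi fun _ => Ioo a b) := by
    ext y
    simp [Set.mem_pi]
  rw [hQ, (EuclideanSpace.volume_preserving_symm_measurableEquiv_toLp (Fin n)).measure_preimage
    ((MeasurableSet.univ_pi fun _ => measurableSet_Ioo).nullMeasurableSet)]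
  rw [volume_pi_pi]
  simp [Real.volume_Ioo, Finset.prod_const, Finset.card_univ,
    ← ENNReal.ofReal_pow (by linarith : (0:ℝ) ≤ b - a)]

lemma cube_measurable {n : ℕ} (a b : ℝ) :
    MeasurableSet {y : EuclideanSpace ℝ (Fin n) | ∀ i, y i ∈ Ioo a b} := by
  have : {y : EuclideanSpace ℝ (Fin n) | ∀ i, y i ∈ Ioo a b} =
      ⋂ i, (fun y : EuclideanSpace ℝ (Fin n) => y i) ⁻¹' (Ioo a b) := by
    ext y; simp
  rw [this]
  exact MeasurableSet.iInter fun i =>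
    ((EuclideanSpace.proj i).continuous.measurable) measurableSet_Ioo







lemma aux_field1 (X S L F A D W : ℝ) (hL : L ≠ 0) (hD : D ≠ 0) (hW : W ≠ 0) :
    X * S / (2*L) * F * A / (D * W) = A * W⁻¹ * (X * S) * (F / (D * L)) * (1/2) := by
  field_simp

lemma aux_field2 (A Wi X S Eg F D L : ℝ) (k : ℕ) (hL : L ≠ 0) (hD : D ≠ 0) :
    A * Wi * (L^k * (X * S)) * (Eg * (F / (D * L^(k+1)))) =
      A * Wi * (X * S) * (F / (D * L)) * Eg := by
  rw [pow_succ]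
  have hLk : L^k ≠ 0 := pow_ne_zero k hL
  field_simp


/-- With `E = (0,1)^n ∩ B(0,1)` and
`Ω = {x : |x| > 1, x_i < 0 ∀i}`, there is `c = c(n) > 0` (the surface measure of
`E ∩ S^{n-1}`) such that for every `j`, every integer `k ≥ 1`, every `0 < δ < 1` and every
`x ∈ Ω`,
`∫_E |x_j - y_j| (log(|x|/|y|))^k |y|^{δ-n} |x-y|^{-(n+1)} dy
  ≥ c k! |x_j| / (δ^{k+1} (|x|+1)^{n+1})`.
The left-hand side equals `|R^k_{j,b} f(x)|` for `b(y) = log|y|` and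
`f(y) = |y|^{δ-n} 1_E(y)`. -/
theorem riesz_commutator_pointwise_lower_bound (n : ℕ) (hn : 1 ≤ n) :
    ∃ c : ℝ, 0 < c ∧
      ∀ (j : Fin n) (k : ℕ), 1 ≤ k → ∀ δ : ℝ, 0 < δ → δ < 1 →
      ∀ x : EuclideanSpace ℝ (Fin n), 1 < ‖x‖ → (∀ i, x i < 0) →
        ENNReal.ofReal (c * (Nat.factorial k : ℝ) * |x j| /
            (δ ^ (k + 1) * (‖x‖ + 1) ^ (n + 1))) ≤
          ∫⁻ y in {y : EuclideanSpace ℝ (Fin n) |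
              (∀ i, y i ∈ Set.Ioo (0 : ℝ) 1) ∧ ‖y‖ < 1},
            ENNReal.ofReal (|x j - y j| * (Real.log (‖x‖ / ‖y‖)) ^ k *
              ‖y‖ ^ (δ - (n : ℝ)) * ‖x - y‖ ^ (-((n : ℝ) + 1))) := by
  have hn0 : (0:ℝ) < n := by exact_mod_cast hn
  have hn1 : (1:ℝ) ≤ n := by exact_mod_cast hn
  have hsq : 0 < Real.sqrt n := Real.sqrt_pos.mpr hn0
  have hsq1 : 1 ≤ Real.sqrt n := by
    rw [show (1:ℝ) = Real.sqrt 1 by simp]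
    exact Real.sqrt_le_sqrt hn1
  set L := Real.log 2 with hLdef
  have hL : 0 < L := Real.log_pos one_lt_two
  have hexpL : Real.exp L = 2 := Real.exp_log two_pos
  refine ⟨Real.exp (-(n:ℝ)*L) * ((Real.sqrt n)⁻¹)^n / (2*L),
    div_pos (mul_pos (Real.exp_pos _) (pow_pos (inv_pos.mpr hsq) n)) (by linarith), ?_⟩
  intro j k hk δ hδ0 hδ1 x hx hxneg
  set γ := δ * L with hγdef
  have hγ : 0 < γ := mul_pos hδ0 hL
  have hγL : γ ≤ L := by nlinarith
  -- the cubes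
  set am : ℕ → ℝ := fun m => Real.exp (-((m:ℝ)+2)*L) / Real.sqrt n with hamdef
  set bm : ℕ → ℝ := fun m => Real.exp (-((m:ℝ)+1)*L) / Real.sqrt n with hbmdef
  set Q : ℕ → Set (EuclideanSpace ℝ (Fin n)) := fun m =>
    {y | ∀ i, y i ∈ Ioo (am m) (bm m)} with hQdef
  have ham : ∀ m : ℕ, 0 < am m := fun m => by positivity
  have hba : ∀ m : ℕ, Real.exp (-((m:ℝ)+1)*L) = 2 * Real.exp (-((m:ℝ)+2)*L) := by
    intro m
    rw [show -((m:ℝ)+1)*L = L + -((m:ℝ)+2)*L by ring, Real.exp_add, hexpL]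
  have hambm : ∀ m : ℕ, am m < bm m := by
    intro m
    simp only [hamdef, hbmdef]
    rw [div_lt_div_iff_of_pos_right hsq, hba m]  -- may need rename
    nlinarith [Real.exp_pos (-((m:ℝ)+2)*L)]
  have hbm_le : ∀ m : ℕ, Real.exp (-((m:ℝ)+1)*L) ≤ 1/2 := by
    intro m
    have h1 : Real.exp (-((m:ℝ)+1)*L) ≤ Real.exp (-L) := by
      apply Real.exp_le_exp.mpr
      have : (0:ℝ) ≤ (m:ℝ) := Nat.cast_nonneg m
      nlinarith
    rw [Real.exp_neg, hexpL] at h1; linarith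
  -- pointwise facts for y ∈ Q m
  have hyfacts : ∀ m : ℕ, ∀ y ∈ Q m, 0 < ‖y‖ ∧ ‖y‖ < Real.exp (-((m:ℝ)+1)*L) ∧
      ‖y‖ < 1 ∧ (∀ i, 0 < y i) := by
    intro m y hy
    have hy' : ∀ i, y i ∈ Ioo (am m) (bm m) := hy
    have hpos : ∀ i, 0 < y i := fun i => (ham m).trans (hy' i).1
    have habs : ∀ i, |y i| < Real.exp (-((m:ℝ)+1)*L) / Real.sqrt n := by
      intro i; rw [abs_of_pos (hpos i)]; exact (hy' i).2
    have hU : ‖y‖ < Real.exp (-((m:ℝ)+1)*L) := by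
      have h2 := norm_lt_of_coords hn y habs
      rwa [mul_comm, div_mul_cancel₀ _ hsq.ne'] at h2
    have h0 : 0 < ‖y‖ := (abs_pos.mpr (hpos j).ne').trans_le (abs_coord_le_norm y j)
    exact ⟨h0, hU, hU.trans_le (by linarith [hbm_le m]), hpos⟩
  -- Q m ⊆ E
  have hQsub : ∀ m : ℕ, Q m ⊆ {y : EuclideanSpace ℝ (Fin n) |
      (∀ i, y i ∈ Set.Ioo (0 : ℝ) 1) ∧ ‖y‖ < 1} := by
    intro m y hy
    obtain ⟨h0, hU, h1, hpos⟩ := hyfacts m y hy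
    refine ⟨fun i => ⟨hpos i, ?_⟩, h1⟩
    have := (hy i).2
    have hb1 : bm m ≤ 1/2 := by
      simp only [hbmdef]
      calc Real.exp (-((m:ℝ)+1)*L) / Real.sqrt n ≤ Real.exp (-((m:ℝ)+1)*L) :=
            div_le_self (Real.exp_pos _).le hsq1
        _ ≤ 1/2 := hbm_le m
    linarith
  have hQmeas : ∀ m : ℕ, MeasurableSet (Q m) := fun m => cube_measurable _ _
  have hQdisj : Pairwise (Function.onFun Disjoint Q) := by
    intro i' j' hij
    simp only [Function.onFun]
    have key : ∀ a b : ℕ, a < b → Disjoint (Q a) (Q b) := by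
      intro a b hab
      refine Set.disjoint_left.mpr fun y hya hyb => ?_
      have i0 : Fin n := ⟨0, hn⟩
      have h1 := (hya i0).2
      have h2 := (hyb i0).1
      have hle : bm b ≤ am a := by
        simp only [hamdef, hbmdef]
        rw [div_le_div_iff_of_pos_right hsq]
        apply Real.exp_le_exp.mpr
        have : (a:ℝ) + 1 ≤ (b:ℝ) := by exact_mod_cast Nat.succ_le_of_lt hab
        nlinarith
      exact absurd ((hyb i0).2.trans_le (hle.trans (hya i0).1.le)) (lt_irrefl _)
    rcases hij.lt_or_gt with h | h
    · exact key _ _ h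
    · exact (key _ _ h).symm
  -- abbreviations
  set F : EuclideanSpace ℝ (Fin n) → ℝ≥0∞ := fun y =>
    ENNReal.ofReal (|x j - y j| * (Real.log (‖x‖ / ‖y‖)) ^ k *
      ‖y‖ ^ (δ - (n : ℝ)) * ‖x - y‖ ^ (-((n : ℝ) + 1))) with hFdef
  set P : ℕ → ℝ := fun m => |x j| * ((((m:ℝ)+1))*L)^k *
    Real.exp (-((m:ℝ)+1)*L) ^ (δ - (n:ℝ)) * (‖x‖+1) ^ (-((n:ℝ)+1)) with hPdef
  set B : ℝ := |x j| * (‖x‖+1) ^ (-((n:ℝ)+1)) *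
    (L^k * (Real.exp (-(n:ℝ)*L) * ((Real.sqrt n)⁻¹)^n)) with hBdef
  have hxj : 0 < |x j| := abs_pos.mpr (hxneg j).ne
  have hxnorm : (0:ℝ) < ‖x‖ := by linarith
  have hPnn : ∀ m : ℕ, 0 ≤ P m := by
    intro m
    refine mul_nonneg (mul_nonneg (mul_nonneg (abs_nonneg _) (pow_nonneg ?_ k))
      (Real.rpow_nonneg (Real.exp_pos _).le _)) (Real.rpow_nonneg (by linarith) _)
    have : (0:ℝ) ≤ (m:ℝ) + 1 := by positivity
    exact mul_nonneg this hL.le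
  have hBnn : 0 ≤ B := by
    refine mul_nonneg (mul_nonneg (abs_nonneg _) (Real.rpow_nonneg (by linarith) _)) ?_
    exact mul_nonneg (pow_nonneg hL.le k)
      (mul_nonneg (Real.exp_pos _).le (pow_nonneg (by positivity) n))
  -- pointwise lower bound on each cube
  have hpoint : ∀ m : ℕ, ∀ y ∈ Q m, ENNReal.ofReal (P m) ≤ F y := by
    intro m y hy
    obtain ⟨hy0, hyU, hy1, hypos⟩ := hyfacts m y hy
    apply ENNReal.ofReal_le_ofReal
    have hyj := hypos j
    have f1 : |x j| ≤ |x j - y j| := by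
      have hxjneg := hxneg j
      rw [abs_of_neg (hxneg j), abs_of_neg (by have := hxneg j; linarith : x j - y j < 0)]
      linarith
    have hlog : ((m:ℝ)+1)*L ≤ Real.log (‖x‖ / ‖y‖) := by
      rw [Real.log_div (by linarith) hy0.ne']
      have h1 : Real.log ‖y‖ ≤ -((m:ℝ)+1)*L := by
        have h2 := Real.log_le_log hy0 hyU.le
        rwa [Real.log_exp] at h2
      have h2 : 0 ≤ Real.log ‖x‖ := Real.log_nonneg hx.le
      linarith
    have hmLnn : (0:ℝ) ≤ ((m:ℝ)+1)*L := by
      have : (0:ℝ) ≤ (m:ℝ) + 1 := by positivity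
      exact mul_nonneg this hL.le
    have hlognn : 0 ≤ Real.log (‖x‖ / ‖y‖) := le_trans hmLnn hlog
    have f2 : (((m:ℝ)+1)*L)^k ≤ (Real.log (‖x‖ / ‖y‖))^k :=
      pow_le_pow_left₀ hmLnn hlog k
    have f3 : Real.exp (-((m:ℝ)+1)*L) ^ (δ - (n:ℝ)) ≤ ‖y‖ ^ (δ - (n:ℝ)) :=
      Real.rpow_le_rpow_of_nonpos hy0 hyU.le (by linarith)
    have hsub : (x - y) j = x j - y j := rfl
    have hxy0 : 0 < ‖x - y‖ := by
      have h1 : |x j - y j| ≤ ‖x - y‖ := by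
        have h2 := abs_coord_le_norm (x - y) j
        rwa [hsub] at h2
      have h3 : 0 < |x j - y j| := abs_pos.mpr (by intro h; linarith [hyj, hxneg j, sub_eq_zero.mp h])
      linarith
    have f4 : (‖x‖+1) ^ (-((n:ℝ)+1)) ≤ ‖x - y‖ ^ (-((n:ℝ)+1)) := by
      refine Real.rpow_le_rpow_of_nonpos hxy0 ?_ (by linarith)
      calc ‖x - y‖ ≤ ‖x‖ + ‖y‖ := norm_sub_le x y
        _ ≤ ‖x‖ + 1 := by linarith
    have g1 : |x j| * (((m:ℝ)+1)*L)^k ≤ |x j - y j| * (Real.log (‖x‖ / ‖y‖))^k :=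
      mul_le_mul f1 f2 (pow_nonneg hmLnn k) (abs_nonneg _)
    have g2 : |x j| * (((m:ℝ)+1)*L)^k * Real.exp (-((m:ℝ)+1)*L) ^ (δ - (n:ℝ)) ≤
        |x j - y j| * (Real.log (‖x‖ / ‖y‖))^k * ‖y‖ ^ (δ - (n:ℝ)) :=
      mul_le_mul g1 f3 (Real.rpow_nonneg (Real.exp_pos _).le _)
        (mul_nonneg (abs_nonneg _) (pow_nonneg hlognn k))
    exact mul_le_mul g2 f4 (Real.rpow_nonneg (by linarith) _)
      (mul_nonneg (mul_nonneg (abs_nonneg _) (pow_nonneg hlognn k))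
        (Real.rpow_nonneg hy0.le _))
  have hcube : ∀ m : ℕ, ENNReal.ofReal (P m) * volume (Q m) ≤ ∫⁻ y in Q m, F y := by
    intro m
    rw [← setLIntegral_const (Q m) (ENNReal.ofReal (P m))]
    exact setLIntegral_mono' (hQmeas m) (fun y hy => hpoint m y hy)
  have hvol : ∀ m : ℕ, volume (Q m) = ENNReal.ofReal ((am m)^n) := by
    intro m
    have h2 : bm m - am m = am m := by
      simp only [hamdef, hbmdef]; rw [hba m]; ring
    calc volume (Q m) = ENNReal.ofReal ((bm m - am m)^n) := cube_volume (hambm m).le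
      _ = ENNReal.ofReal ((am m)^n) := by rw [h2]
  have hterm : ∀ m : ℕ, P m * (am m)^n =
      B * (((m:ℝ)+1)^k * Real.exp (-(γ * ((m:ℝ)+1)))) := by
    intro m
    have hexps : Real.exp ((-((m:ℝ)+1)*L) * (δ - (n:ℝ))) *
        Real.exp ((n:ℝ) * (-((m:ℝ)+2)*L))
        = Real.exp (-(γ * ((m:ℝ)+1))) * Real.exp (-(n:ℝ)*L) := by
      rw [← Real.exp_add, ← Real.exp_add]
      congr 1
      rw [hγdef]; ring
    have e1 : Real.exp (-((m:ℝ)+1)*L) ^ (δ - (n:ℝ)) =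
        Real.exp ((-((m:ℝ)+1)*L) * (δ - (n:ℝ))) := (Real.exp_mul _ _).symm
    have e2 : Real.exp (-((m:ℝ)+2)*L) ^ n =
        Real.exp ((n:ℝ) * (-((m:ℝ)+2)*L)) := (Real.exp_nat_mul _ n).symm
    simp only [hPdef, hBdef, hamdef]
    rw [div_pow, e1, e2, mul_pow]
    linear_combination (|x j| * (‖x‖+1) ^ (-((n:ℝ)+1)) * ((m:ℝ)+1)^k * L^k *
      ((Real.sqrt n)⁻¹)^n) * hexps
  -- final real inequality
  have hW : (‖x‖+1) ^ (-((n:ℝ)+1)) = ((‖x‖+1)^(n+1))⁻¹ := by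
    rw [show -((n:ℝ)+1) = -(((n+1:ℕ)):ℝ) by push_cast; ring,
      Real.rpow_neg (by linarith), Real.rpow_natCast]
  have hgam : γ^(k+1) = δ^(k+1) * L^(k+1) := by rw [hγdef, mul_pow]
  have hhalf : (1:ℝ)/2 ≤ Real.exp (-γ) := by
    have h1 : Real.exp (-L) ≤ Real.exp (-γ) := Real.exp_le_exp.mpr (by linarith)
    rw [Real.exp_neg, hexpL] at h1
    linarith
  set Cf : ℝ := |x j| * ((‖x‖+1)^(n+1))⁻¹ *
    (Real.exp (-(n:ℝ)*L) * ((Real.sqrt n)⁻¹)^n) *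
    ((k.factorial:ℝ) / (δ^(k+1) * L)) with hCfdef
  have hCfnn : 0 ≤ Cf := by
    refine mul_nonneg (mul_nonneg (mul_nonneg (abs_nonneg _) (by positivity)) ?_) ?_
    · exact mul_nonneg (Real.exp_pos _).le (pow_nonneg (by positivity) n)
    · positivity
  have hne1 : (‖x‖ + 1) ≠ 0 := by linarith
  have h1 : Real.exp (-(n:ℝ)*L) * ((Real.sqrt n)⁻¹)^n / (2*L) * (k.factorial:ℝ) * |x j| /
      (δ^(k+1) * (‖x‖+1)^(n+1)) = Cf * (1/2) := by
    rw [hCfdef]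
    exact aux_field1 _ _ _ _ _ _ _ hL.ne' (by positivity) (by positivity)
  have h2 : B * (Real.exp (-γ) * ((k.factorial:ℝ) / γ^(k+1))) = Cf * Real.exp (-γ) := by
    rw [hBdef, hCfdef, hW, hgam]
    exact aux_field2 _ _ _ _ _ _ _ _ k hL.ne' (by positivity)
  have hfinal : Real.exp (-(n:ℝ)*L) * ((Real.sqrt n)⁻¹)^n / (2*L) * (k.factorial:ℝ) * |x j| /
      (δ^(k+1) * (‖x‖+1)^(n+1)) ≤ B * (Real.exp (-γ) * ((k.factorial:ℝ) / γ^(k+1))) := by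
    rw [h1, h2]
    exact mul_le_mul_of_nonneg_left hhalf hCfnn
  -- main chain
  calc ENNReal.ofReal (Real.exp (-(n:ℝ)*L) * ((Real.sqrt n)⁻¹)^n / (2*L) *
        (k.factorial:ℝ) * |x j| / (δ^(k+1) * (‖x‖+1)^(n+1)))
      ≤ ENNReal.ofReal (B * (Real.exp (-γ) * ((k.factorial:ℝ) / γ^(k+1)))) :=
        ENNReal.ofReal_le_ofReal hfinal
    _ = ENNReal.ofReal B * ENNReal.ofReal (Real.exp (-γ) * ((k.factorial:ℝ) / γ^(k+1))) :=
        ENNReal.ofReal_mul hBnn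
    _ ≤ ENNReal.ofReal B * ∑' m : ℕ, ENNReal.ofReal ((m + 1 : ℝ)^k * Real.exp (-(γ*(m+1)))) :=
        mul_le_mul_right (one_dim_sum k hγ) _
    _ = ∑' m : ℕ, ENNReal.ofReal (P m) * volume (Q m) := by
        rw [← ENNReal.tsum_mul_left]
        congr 1
        funext m
        rw [hvol m, ← ENNReal.ofReal_mul (hPnn m), hterm m, ENNReal.ofReal_mul hBnn]
    _ ≤ ∑' m : ℕ, ∫⁻ y in Q m, F y := ENNReal.tsum_le_tsum hcube
    _ = ∫⁻ y in ⋃ m, Q m, F y := (lintegral_iUnion hQmeas hQdisj F).symm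
    _ ≤ ∫⁻ y in {y : EuclideanSpace ℝ (Fin n) |
          (∀ i, y i ∈ Set.Ioo (0 : ℝ) 1) ∧ ‖y‖ < 1}, F y :=
        lintegral_mono_set (iUnion_subset hQsub)
end
end
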